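/- Let μ be a measure on the boundary of the dyadic tree T of depth N. If V^μ(α) ≤ 1 for every α in supp μ, then V^μ(α) ≤ 1 for every α ∈ T (the maximum principle holds on a simple tree). -/

import Mathlib

open Finset

/-- The set of binary strings of length at most `N` (vertices of the dyadic tree of depth `N`).
The order on the tree is: `α ≤ β` iff `β` is a prefix of `α` (`β <+: α`); the root is `[]`. -/
def strings : ℕ → Finset (List Bool)
  | 0 => {([] : List Bool)}
  | N + 1 =>
      {([] : List Bool)} ∪ (strings N).image (List.cons true) ∪ (strings N).image (List.cons false)

/-- `𝕀 f (α) = ∑_{α' ≥ α} f α'`, i.e. the sum of `f` over the prefixes of `α`. -/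
noncomputable def treeI (N : ℕ) (f : List Bool → ℝ) (α : List Bool) : ℝ :=
  ∑ β ∈ (strings N).filter (fun β => β <+: α), f β

/-- `𝕀* f (α) = ∑_{α' ≤ α} f α'`, i.e. the sum of `f` over the strings extending `α`. -/
noncomputable def treeIstar (N : ℕ) (f : List Bool → ℝ) (α : List Bool) : ℝ :=
  ∑ β ∈ (strings N).filter (fun β => α <+: β), f β

/-- The potential `V^μ = 𝕀 (𝕀* μ)`. -/
noncomputable def treeV (N : ℕ) (μ : List Bool → ℝ) : List Bool → ℝ :=
  treeI N (treeIstar N μ)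

/-- The total mass `|μ|`. -/
noncomputable def treeMass (N : ℕ) (μ : List Bool → ℝ) : ℝ :=
  ∑ α ∈ strings N, μ α

/-- A measure on the boundary `∂T` of the dyadic tree of depth `N`: a nonnegative function
vanishing off the strings of length exactly `N`. -/
def IsMeasureOnBoundary (N : ℕ) (μ : List Bool → ℝ) : Prop :=
  (∀ α, 0 ≤ μ α) ∧ ∀ α, μ α ≠ 0 → α.length = N


/-- **Maximum principle on the tree.** If `V^μ ≤ 1` on the support of a measure `μ` on `∂T`,
then `V^μ ≤ 1` everywhere on `T`. -/

lemma mem_strings {N : ℕ} {α : List Bool} : α ∈ strings N ↔ α.length ≤ N := by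
  induction N generalizing α with
  | zero => simp [strings, List.length_eq_zero_iff]
  | succ N ih =>
    simp only [strings, Finset.mem_union, Finset.mem_image, Finset.mem_singleton]
    cases α with
    | nil => simp
    | cons b β => cases b <;> simp [ih, Nat.succ_le_succ_iff]

lemma treeIstar_nonneg {N : ℕ} {μ : List Bool → ℝ} (h : ∀ α, 0 ≤ μ α) (α : List Bool) :
    0 ≤ treeIstar N μ α :=
  Finset.sum_nonneg fun β _ => h β

/-- monotonicity of the potential along the tree -/
lemma treeV_mono {N : ℕ} {μ : List Bool → ℝ} (h : ∀ α, 0 ≤ μ α) {α β : List Bool}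
    (hpre : α <+: β) : treeV N μ α ≤ treeV N μ β := by
  apply Finset.sum_le_sum_of_subset_of_nonneg
  · exact Finset.monotone_filter_right _ fun γ _ hγ => hγ.trans hpre
  · exact fun γ _ _ => treeIstar_nonneg h γ

lemma filter_prefix_eq {N : ℕ} {α : List Bool} (hα : α ∈ strings N) (hne : α ≠ []) :
    (strings N).filter (fun β => β <+: α)
      = insert α ((strings N).filter (fun β => β <+: α.dropLast)) := by
  ext β
  simp only [Finset.mem_filter, Finset.mem_insert]
  constructor
  · rintro ⟨hβ, hpre⟩
    by_cases hβα : β = α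
    · exact Or.inl hβα
    · refine Or.inr ⟨hβ, ?_⟩
      obtain ⟨t, ht⟩ := hpre
      have htne : t ≠ [] := by rintro rfl; simp at ht; exact hβα ht
      refine ⟨t.dropLast, ?_⟩
      rw [← ht, List.dropLast_append_of_ne_nil htne]
  · rintro (rfl | ⟨hβ, hpre⟩)
    · exact ⟨hα, List.prefix_refl _⟩
    · exact ⟨hβ, hpre.trans (List.dropLast_prefix α)⟩

lemma treeV_eq {N : ℕ} {μ : List Bool → ℝ} {α : List Bool} (hα : α ∈ strings N) (hne : α ≠ []) :
    treeV N μ α = treeIstar N μ α + treeV N μ α.dropLast := by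
  unfold treeV treeI
  rw [filter_prefix_eq hα hne, Finset.sum_insert]
  simp only [Finset.mem_filter, not_and]
  intro _ hpre
  have := hpre.length_le
  rw [List.length_dropLast] at this
  have : α.length ≠ 0 := by simpa [List.length_eq_zero_iff] using hne
  omega

theorem stmt0 (N : ℕ) (hN : 1 ≤ N) (μ : List Bool → ℝ)
    (hμ : IsMeasureOnBoundary N μ)
    (hsupp : ∀ α, 0 < μ α → treeV N μ α ≤ 1) :
    ∀ α ∈ strings N, treeV N μ α ≤ 1 := by
  obtain ⟨hpos, -⟩ := hμ
  -- if there is mass below α, follow it to the boundary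
  have key : ∀ α : List Bool, 0 < treeIstar N μ α → treeV N μ α ≤ 1 := by
    intro α hI
    by_contra h
    have : ∃ ω ∈ (strings N).filter (fun β => α <+: β), 0 < μ ω := by
      by_contra hno
      push_neg at hno
      have : treeIstar N μ α ≤ 0 :=
        Finset.sum_nonpos fun ω hω => hno ω hω
      linarith
    obtain ⟨ω, hω, hωpos⟩ := this
    simp only [Finset.mem_filter] at hω
    exact h ((treeV_mono hpos hω.2).trans (hsupp ω hωpos))
  suffices H : ∀ n : ℕ, ∀ α : List Bool, α ∈ strings N → α.length = n → treeV N μ α ≤ 1 by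
    intro α hα; exact H α.length α hα rfl
  intro n
  induction n with
  | zero =>
    intro α hα hlen
    rw [List.length_eq_zero_iff] at hlen
    subst hlen
    rcases (treeIstar_nonneg hpos ([] : List Bool)).lt_or_eq with hI | hI
    · exact key [] hI
    · have hemp : ([] : List Bool) ∈ strings N := by simp [mem_strings]
      rw [treeV, treeI]
      have : (strings N).filter (fun β => β <+: ([] : List Bool)) = {([] : List Bool)} := by
        ext β
        simp only [Finset.mem_filter, Finset.mem_singleton, List.prefix_nil]
        exact ⟨fun h => h.2, fun h => ⟨h ▸ hemp, h⟩⟩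
      rw [this, Finset.sum_singleton, ← hI]
      norm_num
  | succ n ih =>
    intro α hα hlen
    have hne : α ≠ [] := by rintro rfl; simp at hlen
    rcases (treeIstar_nonneg hpos α).lt_or_eq with hI | hI
    · exact key α hI
    · rw [treeV_eq hα hne, ← hI]
      have hdl : α.dropLast ∈ strings N := by
        rw [mem_strings] at hα ⊢
        rw [List.length_dropLast]; omega
      have := ih α.dropLast hdl (by rw [List.length_dropLast, hlen]; rfl)
      linarith
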